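/- Let Z be an n-dimensional naturally graded p-filiform complex Zinbiel algebra of first type (with the adapted basis normalized as in the preceding structure results). Then f_i ∘ f_j = 0 for all 1 ≤ i ≤ s_1 and all s_{n−p−1}+1 ≤ j ≤ s_1. -/
import Mathlib


open Module Submodule

/-- The Zinbiel identity for a bilinear operation `mul` on a complex vector space:
`(x∘y)∘z = x∘(y∘z) + x∘(z∘y)`. -/
def IsZinbiel {Z : Type*} [AddCommGroup Z] [Module ℂ Z] (mul : Z →ₗ[ℂ] Z →ₗ[ℂ] Z) : Prop :=
  ∀ x y z : Z, mul (mul x y) z = mul x (mul y z) + mul x (mul z y)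
/-- The square `Z ∘ Z` of the algebra. -/
def algSq {Z : Type*} [AddCommGroup Z] [Module ℂ Z] (mul : Z →ₗ[ℂ] Z →ₗ[ℂ] Z) :
    Submodule ℂ Z :=
  Submodule.span ℂ {z | ∃ x y, z = mul x y}
/-- `C(Z) = (n-p, 1, …, 1)` (`p`-filiformity) expressed via the left multiplication
operators: for every `x ∉ Z²` the nilpotent operator `L_x` satisfies `L_x^(n-p) = 0`
and has rank at most `n-p-1`; this says exactly that the Jordan type of every `L_x`
is lexicographically at most `(n-p, 1, …, 1)`. -/
def CharSeqMax {Z : Type*} [AddCommGroup Z] [Module ℂ Z]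
    (mul : Z →ₗ[ℂ] Z →ₗ[ℂ] Z) (n p : ℕ) : Prop :=
  ∀ x : Z, x ∉ algSq mul →
    ((mul x : Module.End ℂ Z) ^ (n - p) = 0) ∧
      Module.finrank ℂ (LinearMap.range (mul x)) ≤ n - p - 1
/-- The adapted family `e_1, …, e_m, f_1, …, f_p` indexed by `Fin m ⊕ Fin p`. -/
def adaptedFam {Z : Type*} (m p : ℕ) (e f : ℕ → Z) : Fin m ⊕ Fin p → Z :=
  Sum.elim (fun i => e ((i : ℕ) + 1)) (fun j => f ((j : ℕ) + 1))
/-- `psum s k = s 1 + s 2 + ⋯ + s k`. -/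
def psum (s : ℕ → ℕ) (k : ℕ) : ℕ := ∑ j ∈ Finset.Icc 1 k, s j

/-- Lemma: in the normalized adapted basis, `f_i ∘ f_j = 0` for `1 ≤ i ≤ s_1` and
`s_{n-p-1}+1 ≤ j ≤ s_1`. -/
theorem graded_p_filiform_ff_vanishing
    {Z : Type*} [AddCommGroup Z] [Module ℂ Z]
    (mul : Z →ₗ[ℂ] Z →ₗ[ℂ] Z) (hzin : IsZinbiel mul)
    (n p : ℕ) (hpn : p < n)
    (e f : ℕ → Z)
    -- `{e_1, …, e_{n-p}, f_1, …, f_p}` is a basis of the `n`-dimensional algebra `Z`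
    (hli : LinearIndependent ℂ (adaptedFam (n - p) p e f))
    (hsp : Submodule.span ℂ (Set.range (adaptedFam (n - p) p e f)) = ⊤)
    -- the basis is adapted of first type: `e_1 ∘ e_i = e_{i+1}`, `e_1 ∘ e_{n-p} = 0`,
    -- `e_1 ∘ f_j = 0`
    (hee : ∀ i, 1 ≤ i → i ≤ n - p - 1 → mul (e 1) (e i) = e (i + 1))
    (hetop : mul (e 1) (e (n - p)) = 0)
    (hef : ∀ j, 1 ≤ j → j ≤ p → mul (e 1) (f j) = 0)
    -- the natural gradation `Z = Z_1 ⊕ ⋯ ⊕ Z_{n-p}` : `W i` is the `i`-th component,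
    -- the gradation is multiplicative and generated in degree one
    -- (`Z_{i+1} = Z_1 ∘ Z_i`, coming from `Z_i = Z^i/Z^{i+1}`), and `e_i ∈ Z_i`
    (W : ℕ → Submodule ℂ Z)
    (hW0 : W 0 = ⊥)
    (hWhigh : ∀ i, n - p < i → W i = ⊥)
    (hWint : DirectSum.IsInternal W)
    (hWmul : ∀ i j, ∀ x ∈ W i, ∀ y ∈ W j, mul x y ∈ W (i + j))
    (hWgen : ∀ i, 1 ≤ i → W (i + 1) = Submodule.span ℂ {z | ∃ x ∈ W 1, ∃ y ∈ W i, z = mul x y})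
    (heW : ∀ i, 1 ≤ i → i ≤ n - p → e i ∈ W i)
    -- `Z` is `p`-filiform with characteristic vector `e_1 ∉ Z²`
    (hfil : CharSeqMax mul n p)
    (he1sq : e 1 ∉ algSq mul)
    -- `s_i = dim Z_i - 1` and
    -- `Z_i = ⟨e_i, f_{s_1+⋯+s_{i-1}+1}, …, f_{s_1+⋯+s_i}⟩` for `1 ≤ i ≤ n-p`
    (s : ℕ → ℕ) (hs0 : s 0 = 0) (hshigh : ∀ i, n - p < i → s i = 0)
    (hsum : psum s (n - p) = p)
    (hWspan : ∀ i, 1 ≤ i → i ≤ n - p →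
      W i = Submodule.span ℂ (insert (e i) (f '' Set.Icc (psum s (i - 1) + 1) (psum s i))))
    -- the basis is normalized so that `f_{s_1+⋯+s_{t-1}+i} ∘ e_1 = f_{s_1+⋯+s_t+i}`
    -- for `1 ≤ i ≤ s_{t+1}` and `= 0` for `s_{t+1}+1 ≤ i ≤ s_t`
    (hnorm : ∀ t i, 1 ≤ t → t ≤ n - p - 1 →
      (1 ≤ i → i ≤ s (t + 1) → mul (f (psum s (t - 1) + i)) (e 1) = f (psum s t + i)) ∧
      (s (t + 1) + 1 ≤ i → i ≤ s t → mul (f (psum s (t - 1) + i)) (e 1) = 0))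
    -- the scalars `γ_{ij}` with `f_i ∘ f_j = γ_{ij} e_2 = -f_j ∘ f_i` for `1 ≤ i, j ≤ s_1`
    (γ : ℕ → ℕ → ℂ)
    (hγ : ∀ i j, 1 ≤ i → i ≤ s 1 → 1 ≤ j → j ≤ s 1 → mul (f i) (f j) = γ i j • e 2)
    (hγanti : ∀ i j, 1 ≤ i → i ≤ s 1 → 1 ≤ j → j ≤ s 1 → γ i j = -γ j i)
    :
    ∀ i j, 1 ≤ i → i ≤ s 1 → s (n - p - 1) + 1 ≤ j → j ≤ s 1 →
      mul (f i) (f j) = 0 := by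
  intro i j hi1 his hjlo hjhi
  set m := n - p with hm
  have hm1 : 1 ≤ m := by omega
  have hj1 : 1 ≤ j := le_trans (by omega) hjlo
  have hpsum0 : psum s 0 = 0 := by simp [psum]
  have hpsum1 : psum s 1 = s 1 := by simp [psum]
  have hpsum_succ : ∀ t : ℕ, psum s (t + 1) = psum s t + s (t + 1) := by
    intro t
    exact Finset.sum_Icc_succ_top (by omega) s
  have hpsum_mono : ∀ a b : ℕ, a ≤ b → psum s a ≤ psum s b := by
    intro a b hab
    exact Finset.sum_le_sum_of_subset (Finset.Icc_subset_Icc le_rfl hab)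
  have hfW1 : ∀ k, 1 ≤ k → k ≤ s 1 → f k ∈ W 1 := by
    intro k hk1 hk2
    rw [hWspan 1 le_rfl hm1]
    refine subset_span (Set.mem_insert_of_mem _ ⟨k, ?_, rfl⟩)
    simp only [show (1:ℕ) - 1 = 0 from rfl, hpsum0, hpsum1, Set.mem_Icc]
    omega
  rcases Nat.lt_or_ge m 2 with hm2 | hm2
  · -- case m = 1 : the product lies in W 2 = ⊥
    have hmem : mul (f i) (f j) ∈ W (1 + 1) :=
      hWmul 1 1 _ (hfW1 i hi1 his) _ (hfW1 j hj1 hjhi)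
    have hbot : W 2 = ⊥ := hWhigh 2 (by omega)
    rw [show (1+1 : ℕ) = 2 from rfl, hbot] at hmem
    simpa using hmem
  · -- case m ≥ 2
    set Rlin : Module.End ℂ Z := mul.flip (e 1) with hR
    have hRapp : ∀ x : Z, Rlin x = mul x (e 1) := fun x => rfl
    -- e-chain: e k ∘ e 1 = k • e (k+1)
    have heA : ∀ k, 1 ≤ k → k + 1 ≤ m → mul (e k) (e 1) = (k : ℂ) • e (k + 1) := by
      intro k
      induction k with
      | zero => omega
      | succ k ih =>
        intro _ hk2
        rcases Nat.eq_zero_or_pos k with rfl | hkpos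
        · simpa using hee 1 le_rfl (by omega)
        · have h1 : mul (e 1) (e k) = e (k + 1) := hee k hkpos (by omega)
          have h2 : mul (e 1) (e (k + 1)) = e (k + 2) := hee (k + 1) (by omega) (by omega)
          have hz := hzin (e 1) (e k) (e 1)
          rw [h1, ih hkpos (by omega), map_smul, h2] at hz
          rw [hz]
          push_cast
          module
    -- iterated right multiplication of e 2
    have heA' : ∀ d, d + 2 ≤ m → (Rlin ^ d) (e 2) = ((Nat.factorial (d + 1) : ℕ) : ℂ) • e (d + 2) := by
      intro d
      induction d with
      | zero => intro _; simp
      | succ d ih =>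
        intro hd
        rw [pow_succ', Module.End.mul_apply, ih (by omega), map_smul, hRapp,
          heA (d + 2) (by omega) (by omega), smul_smul]
        rw [show d + 1 + 2 = d + 2 + 1 from rfl]
        congr 1
        push_cast [Nat.factorial_succ]
        ring
    -- killing lemma
    have hK : ∀ d t, 1 ≤ t → t + d = m - 1 → j ≤ s t →
        (Rlin ^ d) (mul (f i) (f (psum s (t - 1) + j))) = 0 := by
      intro d
      induction d with
      | zero =>
        intro t ht1 htd hjt
        exfalso
        have ht : t = m - 1 := by omega
        rw [ht] at hjt
        omega
      | succ d ih =>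
        intro t ht1 htd hjt
        have hidx1 : 1 ≤ psum s (t - 1) + j := by omega
        have hidxp : psum s (t - 1) + j ≤ p := by
          have h1 : psum s (t - 1) + j ≤ psum s (t - 1) + s t := by omega
          have h2 : psum s (t - 1) + s t = psum s t := by
            have := hpsum_succ (t - 1)
            rw [show t - 1 + 1 = t by omega] at this
            omega
          have h3 : psum s t ≤ psum s m := hpsum_mono t m (by omega)
          omega
        have hnrm := hnorm t j ht1 (by omega)
        have hRx : Rlin (mul (f i) (f (psum s (t - 1) + j)))
            = mul (f i) (mul (f (psum s (t - 1) + j)) (e 1)) := by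
          rw [hRapp, hzin (f i) (f (psum s (t - 1) + j)) (e 1),
            hef _ hidx1 hidxp]
          simp
        rw [pow_succ, Module.End.mul_apply, hRx]
        rcases Nat.lt_or_ge (s (t + 1)) j with hlt | hge
        · rw [hnrm.2 (by omega) hjt]
          simp
        · rw [hnrm.1 hj1 hge]
          have := ih (t + 1) (by omega) (by omega) hge
          rw [show t + 1 - 1 = t by omega] at this
          exact this
    have h0 : (Rlin ^ (m - 2)) (mul (f i) (f j)) = 0 := by
      have := hK (m - 2) 1 le_rfl (by omega) hjhi
      rw [show (1:ℕ) - 1 = 0 from rfl, hpsum0] at this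
      simpa using this
    rw [hγ i j hi1 his hj1 hjhi, map_smul,
      heA' (m - 2) (by omega), show m - 2 + 2 = m by omega, smul_smul] at h0
    have hem : e m ≠ 0 := by
      have := hli.ne_zero (Sum.inl ⟨m - 1, by omega⟩)
      simpa [adaptedFam, show m - 1 + 1 = m by omega] using this
    have hfac : ((Nat.factorial (m - 2 + 1) : ℕ) : ℂ) ≠ 0 :=
      Nat.cast_ne_zero.mpr (Nat.factorial_ne_zero _)
    have hγ0 : γ i j = 0 := by
      rcases smul_eq_zero.mp h0 with h | h
      · rcases mul_eq_zero.mp h with h' | h'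
        · exact h'
        · exact absurd h' hfac
      · exact absurd h hem
    rw [hγ i j hi1 his hj1 hjhi, hγ0, zero_smul]
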